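/- For every V ∈ 𝒱 with finite M₂, every y ∈ 𝒴₀, and every T ∈ 𝒯, setting F := ∂_T y: |Σa(y;T) − Σa(y_F;T)| ≤ (1/Ω₀) M₂ max_{x ∈ T∩ℒ} |D²y(x)|, where Σa(y_F;T) = (1/Ω₀) Σ_{j=1}^6 ∂_j V(F𝐚) ⊗ a_j and |·| is the Frobenius norm. -/

import Mathlib

open Real
open scoped BigOperators Classical ENNReal

noncomputable section

namespace AC

/-- The plane `ℝ²` with the Euclidean norm. -/
abbrev E2 := EuclideanSpace ℝ (Fin 2)

/-- `2 × 2` real matrices. -/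
abbrev Mat2 := Matrix (Fin 2) (Fin 2) ℝ

def toE2 (v : Fin 2 → ℝ) : E2 := WithLp.toLp 2 v

/-- The lattice directions `a_j = Q6^(j-1) a_1`, `Q6` the rotation by `π/3`. -/
def avec (j : ℤ) : E2 :=
  toE2 ![Real.cos (((j : ℝ) - 1) * (Real.pi / 3)), Real.sin (((j : ℝ) - 1) * (Real.pi / 3))]

/-- The volume `Ω₀ = √3/2` of a primitive cell. -/
def Om0 : ℝ := Real.sqrt 3 / 2

/-- `𝐚 = (a_1, …, a_6)`. -/
def aFam : Fin 6 → E2 := fun j => avec ((j : ℕ) + 1)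

/-- Matrix-vector multiplication on `E2`. -/
def mvec (F : Mat2) (v : E2) : E2 := toE2 fun i => ∑ k, F i k * v k

/-- `F𝐚 = (F a_1, …, F a_6)`. -/
def Famat (F : Mat2) : Fin 6 → E2 := fun j => mvec F (aFam j)

/-- Lattice coordinates (w.r.t. the basis `a_1, a_2`) of `a_j` (indices mod 6). -/
def ed (j : ℤ) : ℤ × ℤ :=
  match (j % 6).toNat with
  | 1 => (1, 0)
  | 2 => (0, 1)
  | 3 => (-1, 1)
  | 4 => (-1, 0)
  | 5 => (0, -1)
  | _ => (1, -1)

/-- The lattice point `n₁ a₁ + n₂ a₂`; `ℒ = emb '' (ℤ × ℤ)`. -/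
def emb (n : ℤ × ℤ) : E2 := (n.1 : ℝ) • avec 1 + (n.2 : ℝ) • avec 2

/-- Forward finite difference `D_j v(x) = v(x + a_j) - v(x)` in lattice coordinates. -/
def Dd (j : ℤ) (v : ℤ × ℤ → E2) (n : ℤ × ℤ) : E2 := v (n + ed j) - v n

/-- `Dv(x) = (D_1 v(x), …, D_6 v(x))`. -/
def Dfam (y : ℤ × ℤ → E2) (n : ℤ × ℤ) : Fin 6 → E2 := fun j => Dd ((j : ℕ) + 1) y n

/-- Euclidean dot product. -/
def dotE (v w : E2) : ℝ := ∑ i, v i * w i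

/-- Frobenius inner product `A : B`. -/
def frobI (A B : Mat2) : ℝ := ∑ i, ∑ k, A i k * B i k

/-- Frobenius norm. -/
def frobN (A : Mat2) : ℝ := Real.sqrt (∑ i, ∑ k, (A i k) ^ 2)

/-- Outer product `v ⊗ w`. -/
def outer (v w : E2) : Mat2 := fun i k => v i * w k

/-- The element of `(ℝ²)⁶` with `k`-th standard basis vector in slot `j` and `0` elsewhere. -/
def unitv (j : Fin 6) (k : Fin 2) : Fin 6 → E2 := fun i => if i = j then toE2 (Pi.single k 1) else 0

/-- Partial gradient `∂_j V(g) ∈ ℝ²` of `V` with respect to its `j`-th argument. -/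
def pd (V : (Fin 6 → E2) → ℝ) (j : Fin 6) (g : Fin 6 → E2) : E2 :=
  toE2 fun k => deriv (fun t : ℝ => V (g + t • unitv j k)) 0

/-- Second partial derivative `∂_{ij} V(g) ∈ ℝ^{2×2}`. -/
def pd2 (V : (Fin 6 → E2) → ℝ) (i j : Fin 6) (g : Fin 6 → E2) : Mat2 :=
  fun k l => deriv (fun t : ℝ => pd V j (g + t • unitv i k) l) 0

/-- Third partial derivative `∂_{ijk} V(g)`. -/
def pd3 (V : (Fin 6 → E2) → ℝ) (i j k : Fin 6) (g : Fin 6 → E2) : Fin 2 → Fin 2 → Fin 2 → ℝ :=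
  fun p q r => deriv (fun t : ℝ => pd2 V j k (g + t • unitv i p) q r) 0

/-- Operator norm of a matrix viewed as a bilinear form on `ℝ²`. -/
def matOpNorm (A : Mat2) : ℝ :=
  sSup {r : ℝ | ∃ h1 h2 : E2, ‖h1‖ = 1 ∧ ‖h2‖ = 1 ∧ r = ∑ k, ∑ l, A k l * h1 k * h2 l}

/-- Norm of a trilinear form on `ℝ²`. -/
def t3norm (B : Fin 2 → Fin 2 → Fin 2 → ℝ) : ℝ :=
  sSup {r : ℝ | ∃ h1 h2 h3 : E2, ‖h1‖ = 1 ∧ ‖h2‖ = 1 ∧ ‖h3‖ = 1 ∧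
    r = ∑ p, ∑ q, ∑ s, B p q s * h1 p * h2 q * h3 s}

/-- `M₂ = Σ_{i,j} sup_g ‖∂_{ij}V(g)‖`. -/
def M2 (V : (Fin 6 → E2) → ℝ) : ℝ :=
  ∑ i : Fin 6, ∑ j : Fin 6, ⨆ g : Fin 6 → E2, matOpNorm (pd2 V i j g)

/-- `M₃ = Σ_{i,j,k} sup_g ‖∂_{ijk}V(g)‖`. -/
def M3 (V : (Fin 6 → E2) → ℝ) : ℝ :=
  ∑ i : Fin 6, ∑ j : Fin 6, ∑ k : Fin 6, ⨆ g : Fin 6 → E2, t3norm (pd3 V i j k g)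

/-- Finiteness of `M₂`. -/
def M2fin (V : (Fin 6 → E2) → ℝ) : Prop :=
  ∀ i j : Fin 6, BddAbove (Set.range fun g : Fin 6 → E2 => matOpNorm (pd2 V i j g))

/-- Finiteness of `M₃`. -/
def M3fin (V : (Fin 6 → E2) → ℝ) : Prop :=
  ∀ i j k : Fin 6, BddAbove (Set.range fun g : Fin 6 → E2 => t3norm (pd3 V i j k g))

/-- The class `𝒱`: `C³` potentials with the point symmetry `V((-g_{j+3})_j) = V(g)`. -/
def memV (V : (Fin 6 → E2) → ℝ) : Prop :=
  ContDiff ℝ 3 V ∧ ∀ g : Fin 6 → E2, V (fun j => -g (j + 3)) = V g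

/-- Cauchy–Born stored energy `W(F) = V(F𝐚)/Ω₀`. -/
def Wf (V : (Fin 6 → E2) → ℝ) (F : Mat2) : ℝ := V (Famat F) / Om0

/-- `∂W(F) ∈ ℝ^{2×2}`. -/
def DW (V : (Fin 6 → E2) → ℝ) (F : Mat2) : Mat2 :=
  fun i k => deriv (fun t : ℝ => Wf V (F + t • Matrix.single i k 1)) 0

/-- The matrix `G` with `G b₁ = v₁`, `G b₂ = v₂` (for linearly independent `b₁, b₂`). -/
def solve2 (b1 b2 v1 v2 : E2) : Mat2 := fun i k =>
  (if k = 0 then v1 i * b2 1 - v2 i * b1 1 else v2 i * b1 0 - v1 i * b2 0) /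
    (b1 0 * b2 1 - b1 1 * b2 0)

/-- Triangles of the canonical triangulation `𝒯`: `(n, true)` is the upward triangle
with vertices `n, n+a₁, n+a₂`, and `(n, false)` the downward triangle with vertices
`n, n+a₁, n+a₆` (in lattice coordinates). -/
abbrev Tri := (ℤ × ℤ) × Bool

/-- The gradient `∂_T y` of the piecewise affine interpolant of `y` on `T`. -/
def triGrad (y : ℤ × ℤ → E2) (T : Tri) : Mat2 :=
  if T.2 then solve2 (avec 1) (avec 2) (Dd 1 y T.1) (Dd 2 y T.1)
  else solve2 (avec 1) (avec 6) (Dd 1 y T.1) (Dd 6 y T.1)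

/-- The vertices `T ∩ ℒ` of a triangle, in lattice coordinates. -/
def triVerts (T : Tri) : Finset (ℤ × ℤ) :=
  if T.2 then {T.1, T.1 + (1, 0), T.1 + (0, 1)} else {T.1, T.1 + (1, 0), T.1 + (1, -1)}

/-- `x_{T,j}`: the unique lattice point with `x_{T,j}, x_{T,j} + a_{j+1} ∈ T`
(here `j : Fin 6` labels the direction `a_{j+1}`). -/
def xT (T : Tri) (j : Fin 6) : ℤ × ℤ :=
  T.1 + (if T.2 then
    (match (j : ℕ) with
     | 0 => ((0 : ℤ), (0 : ℤ)) | 1 => (0, 0) | 2 => (1, 0) | 3 => (1, 0) | 4 => (0, 1) | _ => (0, 1))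
  else
    (match (j : ℕ) with
     | 0 => ((0 : ℤ), (0 : ℤ)) | 1 => (1, -1) | 2 => (1, -1) | 3 => (1, 0) | 4 => (1, 0) | _ => (0, 0)))

/-- The neighbouring triangle `T_j` of `T` sharing the edge with direction `a_{j+1}`. -/
def nbr (T : Tri) (j : Fin 6) : Tri :=
  if T.2 then
    (T.1 + (match (j : ℕ) % 3 with | 0 => ((0 : ℤ), (0 : ℤ)) | 1 => (-1, 1) | _ => (0, 1)), false)
  else
    (T.1 + (match (j : ℕ) % 3 with | 0 => ((0 : ℤ), (0 : ℤ)) | 1 => (1, -1) | _ => (0, -1)), true)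

/-- The triangle `T_{x,j} = conv{x, x + a_j, x + a_{j+1}}` (index `j` mod 6). -/
def Txj (x : ℤ × ℤ) (j : ℤ) : Tri :=
  match (j % 6).toNat with
  | 1 => (x, true)
  | 2 => (x + (-1, 1), false)
  | 3 => (x + (-1, 0), true)
  | 4 => (x + (-1, 0), false)
  | 5 => (x + (0, -1), true)
  | _ => (x, false)

/-- The Cauchy–Born site potential `V^c(g) = (Ω₀/6) Σ_j W(∂_{T_{x,j}} y)` as a function
of the six differences `g = Dy(x)`. -/
def Vc (V : (Fin 6 → E2) → ℝ) (g : Fin 6 → E2) : ℝ :=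
  Om0 / 6 * ∑ j : Fin 6, Wf V (solve2 (avec ((j : ℕ) + 1)) (avec ((j : ℕ) + 2)) (g j) (g (j + 1)))

/-- The atomistic stress `Σa(y;T)`. -/
def Sa (V : (Fin 6 → E2) → ℝ) (y : ℤ × ℤ → E2) (T : Tri) : Mat2 :=
  Om0⁻¹ • ∑ j : Fin 6, outer (pd V j (Dfam y (xT T j))) (aFam j)

/-- The continuum stress `Σc¹(y;T) = ∂W(∂_T y)`. -/
def Sc1 (V : (Fin 6 → E2) → ℝ) (y : ℤ × ℤ → E2) (T : Tri) : Mat2 := DW V (triGrad y T)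

/-- The continuum stress `Σc²(y;T)`. -/
def Sc2 (V : (Fin 6 → E2) → ℝ) (y : ℤ × ℤ → E2) (T : Tri) : Mat2 :=
  Om0⁻¹ • ∑ j : Fin 6, (2 : ℝ)⁻¹ •
    outer (pd V j (Famat (triGrad y T)) + pd V j (Famat (triGrad y (nbr T j)))) (aFam j)

/-- The continuum stress `Σc³(y;T)`. -/
def Sc3 (V : (Fin 6 → E2) → ℝ) (y : ℤ × ℤ → E2) (T : Tri) : Mat2 :=
  Om0⁻¹ • ∑ j : Fin 6, outer (pd (Vc V) j (Dfam y (xT T j))) (aFam j)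

/-- The interface region `ℐ` determined by the atomistic region `𝒜`. -/
def interf (A : Set (ℤ × ℤ)) : Set (ℤ × ℤ) :=
  {x | x ∉ A ∧ ∃ j : Fin 6, x + ed ((j : ℕ) + 1) ∈ A}

/-- The continuum region `𝒞 = ℒ ∖ (𝒜 ∪ ℐ)`. -/
def contR (A : Set (ℤ × ℤ)) : Set (ℤ × ℤ) := {x | x ∉ A ∧ x ∉ interf A}

/-- The reconstructed interface potential `V^i(g) = V((Σ_i C_{j,i} g_i)_j)`. -/
def Vi (V : (Fin 6 → E2) → ℝ) (Cp : Fin 6 → Fin 6 → ℝ) (g : Fin 6 → E2) : ℝ :=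
  V fun j => ∑ i : Fin 6, Cp j i • g i

/-- The hybrid site potential `V^ac_x`. -/
def Vac (V : (Fin 6 → E2) → ℝ) (C : ℤ × ℤ → Fin 6 → Fin 6 → ℝ) (A : Set (ℤ × ℤ))
    (x : ℤ × ℤ) : (Fin 6 → E2) → ℝ :=
  if x ∈ A then V else if x ∈ interf A then Vi V (C x) else Vc V

/-- First variation `⟨δE_a(y), u⟩` of the atomistic energy. -/
def dEa (V : (Fin 6 → E2) → ℝ) (y u : ℤ × ℤ → E2) : ℝ :=
  ∑ᶠ n : ℤ × ℤ, ∑ j : Fin 6, dotE (pd V j (Dfam y n)) (Dfam u n j)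

/-- First variation `⟨δE_c(y), u⟩` of the Cauchy–Born energy. -/
def dEc (V : (Fin 6 → E2) → ℝ) (y u : ℤ × ℤ → E2) : ℝ :=
  ∑ᶠ T : Tri, Om0 / 2 * frobI (DW V (triGrad y T)) (triGrad u T)

/-- First variation `⟨δE_ac(y), u⟩` of the a/c coupling energy. -/
def dEac (V : (Fin 6 → E2) → ℝ) (C : ℤ × ℤ → Fin 6 → Fin 6 → ℝ) (A : Set (ℤ × ℤ))
    (y u : ℤ × ℤ → E2) : ℝ :=
  ∑ᶠ n : ℤ × ℤ, ∑ i : Fin 6, dotE (pd (Vac V C A n) i (Dfam y n)) (Dfam u n i)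

/-- The a/c stress `Σac(y;T)`. -/
def Sac (V : (Fin 6 → E2) → ℝ) (C : ℤ × ℤ → Fin 6 → Fin 6 → ℝ) (A : Set (ℤ × ℤ))
    (y : ℤ × ℤ → E2) (T : Tri) : Mat2 :=
  Om0⁻¹ • ∑ j : Fin 6, outer (pd (Vac V C A (xT T j)) j (Dfam y (xT T j))) (aFam j)

/-- `u ∈ 𝒰₀`: finitely supported displacement. -/
def FinSupp (u : ℤ × ℤ → E2) : Prop := (Function.support u).Finite

/-- `y ∈ 𝒴₀`: deformation with `y - id` finitely supported. -/
def inY0 (y : ℤ × ℤ → E2) : Prop := (Function.support fun n => y n - emb n).Finite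

/-- The homogeneous deformation `y_F(x) = Fx`. -/
def yhom (F : Mat2) : ℤ × ℤ → E2 := fun n => mvec F (emb n)

/-- One-sidedness: `C_{j,i} = 0` unless `i ∈ {j-1, j, j+1}` (mod 6). -/
def oneSided (Cp : Fin 6 → Fin 6 → ℝ) : Prop :=
  ∀ j i : Fin 6, i ≠ j - 1 → i ≠ j → i ≠ j + 1 → Cp j i = 0

/-- Local energy consistency: `C_{j,j-1} = C_{j,j+1} = 1 - C_{j,j}`. -/
def eCons (Cp : Fin 6 → Fin 6 → ℝ) : Prop :=
  ∀ j : Fin 6, Cp j (j - 1) = 1 - Cp j j ∧ Cp j (j + 1) = 1 - Cp j j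

/-- The coefficients corresponding to the atomistic site potential (`C_{x,j} = 1`). -/
def atomC : Fin 6 → Fin 6 → ℝ := fun j i => if i = j then 1 else 0

/-- The coefficients corresponding to the Cauchy–Born site potential (`C_{x,j} = 2/3`). -/
def cbC : Fin 6 → Fin 6 → ℝ := fun j i =>
  if i = j then 2 / 3 else if i = j - 1 ∨ i = j + 1 then 1 / 3 else 0

/-- The negative force `-f_ac(x; y_F) = Σ_{j,i} (C_{x-a_i,j,i} - C_{x,j,i}) ∂_j V(F𝐚)`. -/
def forceSum (C : ℤ × ℤ → Fin 6 → Fin 6 → ℝ) (V : (Fin 6 → E2) → ℝ) (F : Mat2)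
    (x : ℤ × ℤ) : E2 :=
  ∑ j : Fin 6, ∑ i : Fin 6, (C (x - ed ((i : ℕ) + 1)) j i - C x j i) • pd V j (Famat F)

/-- The force consistency condition (5.2) on the coefficients. -/
def fCons (C : ℤ × ℤ → Fin 6 → Fin 6 → ℝ) : Prop :=
  ∀ j : Fin 6, (j : ℕ) < 3 → ∀ x : ℤ × ℤ,
    ∑ i : Fin 6, (C (x - ed ((i : ℕ) + 1)) j i - C (x - ed ((i : ℕ) + 1)) (j + 3) i
      - C x j i + C x (j + 3) i) = 0

/-- `|D²y(x)| = max_{i,j} |D_i D_j y(x)|`. -/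
def D2n (y : ℤ × ℤ → E2) (n : ℤ × ℤ) : ℝ :=
  ⨆ i : Fin 6, ⨆ j : Fin 6, ‖Dd ((i : ℕ) + 1) (Dd ((j : ℕ) + 1) y) n‖

/-- `|D³y(x)| = max_{i,j,k} |D_i D_j D_k y(x)|`. -/
def D3n (y : ℤ × ℤ → E2) (n : ℤ × ℤ) : ℝ :=
  ⨆ i : Fin 6, ⨆ j : Fin 6, ⨆ k : Fin 6,
    ‖Dd ((i : ℕ) + 1) (Dd ((j : ℕ) + 1) (Dd ((k : ℕ) + 1) y)) n‖

/-- `ℓ^p` norm of a lattice function over a subset `S ⊆ ℒ`. -/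
def lpNormS (p : ℝ≥0∞) (f : ℤ × ℤ → ℝ) (S : Set (ℤ × ℤ)) : ℝ :=
  if p = ⊤ then ⨆ x : S, |f x| else (∑ᶠ x ∈ S, |f x| ^ p.toReal) ^ (1 / p.toReal)

/-- `‖∂u‖_{L^q}` for the piecewise affine interpolant. -/
def gradLp (q : ℝ≥0∞) (u : ℤ × ℤ → E2) : ℝ :=
  if q = ⊤ then ⨆ T : Tri, frobN (triGrad u T)
  else (∑ᶠ T : Tri, Om0 / 2 * frobN (triGrad u T) ^ q.toReal) ^ (1 / q.toReal)

/-- `𝒯_𝒜`: triangles with `T ∩ (ℐ ∪ 𝒞) = ∅`. -/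
def TA (A : Set (ℤ × ℤ)) : Set Tri := {T | ∀ n ∈ triVerts T, n ∉ interf A ∧ n ∉ contR A}

/-- `𝒯_𝒞`: triangles with `T ∩ (ℐ ∪ 𝒜) = ∅`. -/
def TC (A : Set (ℤ × ℤ)) : Set Tri := {T | ∀ n ∈ triVerts T, n ∉ interf A ∧ n ∉ A}

/-- `𝒯_ℐ = 𝒯 ∖ (𝒯_𝒜 ∪ 𝒯_𝒞)`. -/
def TI (A : Set (ℤ × ℤ)) : Set Tri := {T | T ∉ TA A ∧ T ∉ TC A}

/-- The midpoint of the edge `(x, x + a_j)`. -/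
def edgeMid (x : ℤ × ℤ) (j : ℤ) : E2 := emb x + (2 : ℝ)⁻¹ • avec j

/-- The edge `(x, x+a_j)` belongs to `𝔉_𝒜` (it lies in a triangle of `𝒯_𝒜`). -/
def edgeInA (A : Set (ℤ × ℤ)) (x : ℤ × ℤ) (j : ℤ) : Prop :=
  Txj x j ∈ TA A ∨ Txj x (j - 1) ∈ TA A

/-- The edge `(x, x+a_j)` belongs to `𝔉_𝒞`. -/
def edgeInC (A : Set (ℤ × ℤ)) (x : ℤ × ℤ) (j : ℤ) : Prop :=
  Txj x j ∈ TC A ∨ Txj x (j - 1) ∈ TC A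

/-- Rotation by `π/2`. -/
def Jmat : Mat2 := !![0, -1; 1, 0]

/-- Midpoint continuity of a piecewise affine field: membership in `N1(𝒯)²`. -/
def midCont (ψ : Tri → E2 → E2) : Prop :=
  ∀ (x : ℤ × ℤ) (j : ℤ), ψ (Txj x j) (edgeMid x j) = ψ (Txj x (j - 1)) (edgeMid x j)

/-- `ψ` is piecewise affine with Jacobian `G T` on each triangle `T`. -/
def affWith (ψ : Tri → E2 → E2) (G : Tri → Mat2) : Prop :=
  ∀ (T : Tri) (z w : E2), ψ T z - ψ T w = mvec (G T) (z - w)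

/-- Assumption 4.1: every interface atom has exactly two interface neighbours and
at least one continuum neighbour. -/
def InterfaceOK (A : Set (ℤ × ℤ)) : Prop :=
  ∀ x ∈ interf A,
    ({j : Fin 6 | x + ed ((j : ℕ) + 1) ∈ interf A}).ncard = 2 ∧
    ∃ j : Fin 6, x + ed ((j : ℕ) + 1) ∈ contR A

/-- The patch test: local energy consistency and local force consistency for all `V ∈ 𝒱`. -/
def PatchTest (C : ℤ × ℤ → Fin 6 → Fin 6 → ℝ) (A : Set (ℤ × ℤ)) : Prop :=
  (∀ V, memV V → ∀ F : Mat2, ∀ x ∈ interf A, Vi V (C x) (Famat F) = V (Famat F)) ∧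
  (∀ V, memV V → ∀ F : Mat2, ∀ u, FinSupp u → dEac V C A (yhom F) u = 0)

/-- The closed triangle `T ⊆ ℝ²`. -/
def triSet (T : Tri) : Set E2 :=
  convexHull ℝ {emb T.1, emb (T.1 + (1, 0)), emb (T.1 + (if T.2 then ((0 : ℤ), (1 : ℤ)) else (1, -1)))}

/-- The closed edge `[x, x + a_j] ⊆ ℝ²`. -/
def edgeSeg (x : ℤ × ℤ) (j : ℤ) : Set E2 := segment ℝ (emb x) (emb (x + ed j))

/-- The atomistic region of the flat interface: `{x ∈ ℒ : x₂ < 0}`. -/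
def flatA : Set (ℤ × ℤ) := {n | emb n 1 < 0}

/-- The extended interface region `ℐ^ext = {x ∈ ℒ : dist(x, ℐ) ≤ 1}`. -/
def Iext (A : Set (ℤ × ℤ)) : Set (ℤ × ℤ) := {x | ∃ z ∈ interf A, ‖emb x - emb z‖ ≤ 1}

/-- Embedding `Fin 3 → Fin 6`. -/
def jlift (j : Fin 3) : Fin 6 := ⟨(j : ℕ), by omega⟩

end AC
section Helpers
open AC

lemma toE2_apply (v : Fin 2 → ℝ) (k : Fin 2) : toE2 v k = v k := rfl
lemma e2_sub_apply (u v : E2) (k : Fin 2) : (u - v) k = u k - v k := rfl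
lemma e2_add_apply (u v : E2) (k : Fin 2) : (u + v) k = u k + v k := rfl
lemma e2_smul_apply (c : ℝ) (u : E2) (k : Fin 2) : (c • u) k = c * u k := rfl
lemma e2_neg_apply (u : E2) (k : Fin 2) : (-u) k = -(u k) := rfl
lemma e2_zero_apply (k : Fin 2) : (0 : E2) k = 0 := rfl

lemma e2_ext {u v : E2} (h : ∀ k, u k = v k) : u = v := PiLp.ext h

lemma e2_norm_eq (v : E2) : ‖v‖ = Real.sqrt (v 0 ^ 2 + v 1 ^ 2) := by
  rw [EuclideanSpace.norm_eq]
  simp [Fin.sum_univ_two, Real.norm_eq_abs, sq_abs]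

lemma e2_sq_norm (v : E2) : v 0 ^ 2 + v 1 ^ 2 = ‖v‖ ^ 2 := by
  rw [e2_norm_eq, Real.sq_sqrt (by positivity)]

lemma e2_abs_le (v : E2) (k : Fin 2) : |v k| ≤ ‖v‖ := by
  rw [e2_norm_eq, ← Real.sqrt_sq_eq_abs]
  apply Real.sqrt_le_sqrt
  have h0 : v ⟨0, by norm_num⟩ = v 0 := rfl
  have h1 : v ⟨1, by norm_num⟩ = v 1 := rfl
  fin_cases k <;> simp only [h0, h1] <;> nlinarith [sq_nonneg (v 0), sq_nonneg (v 1)]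

lemma av1 : avec 1 = toE2 ![1, 0] := by
  unfold avec; norm_num

lemma av2 : avec 2 = toE2 ![1/2, Real.sqrt 3 / 2] := by
  unfold avec
  norm_num [Real.cos_pi_div_three, Real.sin_pi_div_three]

lemma av3 : avec 3 = toE2 ![-(1/2), Real.sqrt 3 / 2] := by
  unfold avec
  have h : (((3:ℤ):ℝ) - 1) * (Real.pi/3) = Real.pi - Real.pi/3 := by push_cast; ring
  rw [h, Real.cos_pi_sub, Real.sin_pi_sub]
  norm_num [Real.cos_pi_div_three, Real.sin_pi_div_three]

lemma av4 : avec 4 = toE2 ![-1, 0] := by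
  unfold avec
  have h : (((4:ℤ):ℝ) - 1) * (Real.pi/3) = Real.pi := by push_cast; ring
  rw [h, Real.cos_pi, Real.sin_pi]

lemma av5 : avec 5 = toE2 ![-(1/2), -(Real.sqrt 3 / 2)] := by
  unfold avec
  have h : (((5:ℤ):ℝ) - 1) * (Real.pi/3) = Real.pi + Real.pi/3 := by push_cast; ring
  rw [h, Real.cos_add, Real.sin_add, Real.cos_pi, Real.sin_pi]
  norm_num [Real.cos_pi_div_three, Real.sin_pi_div_three]

lemma av6 : avec 6 = toE2 ![1/2, -(Real.sqrt 3 / 2)] := by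
  unfold avec
  have h : (((6:ℤ):ℝ) - 1) * (Real.pi/3) = 2*Real.pi - Real.pi/3 := by push_cast; ring
  rw [h, Real.cos_sub, Real.sin_sub, Real.cos_two_pi, Real.sin_two_pi]
  norm_num [Real.cos_pi_div_three, Real.sin_pi_div_three]

lemma mvec_apply (F : Mat2) (v : E2) (k : Fin 2) : mvec F v k = F k 0 * v 0 + F k 1 * v 1 := by
  simp [mvec, toE2, Fin.sum_univ_two]

lemma mvec_sub (F : Mat2) (u v : E2) : mvec F (u - v) = mvec F u - mvec F v := by
  refine e2_ext fun k => ?_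
  simp only [e2_sub_apply, mvec_apply]; ring

lemma mvec_add (F : Mat2) (u v : E2) : mvec F (u + v) = mvec F u + mvec F v := by
  refine e2_ext fun k => ?_
  simp only [e2_add_apply, mvec_apply]; ring

lemma mvec_neg (F : Mat2) (u : E2) : mvec F (-u) = -mvec F u := by
  refine e2_ext fun k => ?_
  simp only [e2_neg_apply, mvec_apply]; ring

lemma mvec_solve2_fst (b1 b2 v1 v2 : E2) (h : b1 0 * b2 1 - b1 1 * b2 0 ≠ 0) :
    mvec (solve2 b1 b2 v1 v2) b1 = v1 := by
  refine e2_ext fun k => ?_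
  simp only [mvec_apply, solve2]
  rw [if_pos trivial, if_neg (by decide)]
  rw [div_mul_eq_mul_div, div_mul_eq_mul_div, ← add_div, div_eq_iff h]
  ring

lemma mvec_solve2_snd (b1 b2 v1 v2 : E2) (h : b1 0 * b2 1 - b1 1 * b2 0 ≠ 0) :
    mvec (solve2 b1 b2 v1 v2) b2 = v2 := by
  refine e2_ext fun k => ?_
  simp only [mvec_apply, solve2]
  rw [if_pos trivial, if_neg (by decide)]
  rw [div_mul_eq_mul_div, div_mul_eq_mul_div, ← add_div, div_eq_iff h]
  ring

lemma ed1 : ed 1 = (1, 0) := by decide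
lemma ed2 : ed 2 = (0, 1) := by decide
lemma ed3 : ed 3 = (-1, 1) := by decide
lemma ed4 : ed 4 = (-1, 0) := by decide
lemma ed5 : ed 5 = (0, -1) := by decide
lemma ed6 : ed 6 = (1, -1) := by decide

lemma sqrt3_pos : (0:ℝ) < Real.sqrt 3 := Real.sqrt_pos.mpr (by norm_num)

lemma det12 : avec 1 0 * avec 2 1 - avec 1 1 * avec 2 0 ≠ 0 := by
  rw [av1, av2]
  simp only [toE2_apply, Matrix.cons_val_zero, Matrix.cons_val_one, Matrix.head_cons]
  have := sqrt3_pos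
  intro h; norm_num at h

lemma det16 : avec 1 0 * avec 6 1 - avec 1 1 * avec 6 0 ≠ 0 := by
  rw [av1, av6]
  simp only [toE2_apply, Matrix.cons_val_zero, Matrix.cons_val_one, Matrix.head_cons]
  have := sqrt3_pos
  intro h; norm_num at h

lemma av3_eq : avec 3 = avec 2 - avec 1 := by
  rw [av1, av2, av3]
  refine e2_ext fun k => ?_
  fin_cases k <;> simp [e2_sub_apply, toE2_apply] <;> norm_num

lemma av4_eq : avec 4 = -avec 1 := by
  rw [av1, av4]
  refine e2_ext fun k => ?_
  fin_cases k <;> simp [e2_neg_apply, toE2_apply]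

lemma av5_eq : avec 5 = -avec 2 := by
  rw [av2, av5]
  refine e2_ext fun k => ?_
  fin_cases k <;> simp [e2_neg_apply, toE2_apply] <;> norm_num

lemma av6_eq : avec 6 = avec 1 - avec 2 := by
  rw [av1, av2, av6]
  refine e2_ext fun k => ?_
  fin_cases k <;> simp [e2_sub_apply, toE2_apply] <;> norm_num

lemma av2_eq' : avec 2 = avec 1 - avec 6 := by rw [av6_eq]; abel
lemma av3_eq' : avec 3 = -avec 6 := by rw [av3_eq, av6_eq]; abel
lemma av5_eq' : avec 5 = avec 6 - avec 1 := by rw [av5_eq, av6_eq]; abel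

lemma emb_add (a b : ℤ × ℤ) : emb (a + b) = emb a + emb b := by
  simp only [emb, Prod.fst_add, Prod.snd_add]
  push_cast
  module

lemma emb_ed1 : emb (ed 1) = avec 1 := by rw [ed1]; simp only [emb]; push_cast; module
lemma emb_ed2 : emb (ed 2) = avec 2 := by rw [ed2]; simp only [emb]; push_cast; module
lemma emb_ed3 : emb (ed 3) = avec 3 := by
  rw [ed3]; simp only [emb]; push_cast; rw [av3_eq]; module
lemma emb_ed4 : emb (ed 4) = avec 4 := by
  rw [ed4]; simp only [emb]; push_cast; rw [av4_eq]; module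
lemma emb_ed5 : emb (ed 5) = avec 5 := by
  rw [ed5]; simp only [emb]; push_cast; rw [av5_eq]; module
lemma emb_ed6 : emb (ed 6) = avec 6 := by
  rw [ed6]; simp only [emb]; push_cast; rw [av6_eq]; module

lemma emb_ed (j : Fin 6) : emb (ed ((j:ℕ) + 1)) = avec ((j:ℕ) + 1) := by
  fin_cases j
  · convert emb_ed1 using 2 <;> norm_num
  · convert emb_ed2 using 2 <;> norm_num
  · convert emb_ed3 using 2 <;> norm_num
  · convert emb_ed4 using 2 <;> norm_num
  · convert emb_ed5 using 2 <;> norm_num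
  · convert emb_ed6 using 2 <;> norm_num

lemma dfam_yhom (F : Mat2) (n : ℤ × ℤ) : Dfam (yhom F) n = Famat F := by
  funext j
  simp only [Dfam, Dd, yhom, Famat, aFam]
  rw [emb_add, mvec_add, emb_ed j]
  abel

lemma famat_eq (y : ℤ × ℤ → E2) (T : Tri) (i : Fin 6) :
    Famat (triGrad y T) i = Dd ((i:ℕ) + 1) y (xT T i) := by
  obtain ⟨x0, b⟩ := T
  have h1 := mvec_solve2_fst (avec 1) (avec 2) (Dd 1 y x0) (Dd 2 y x0) det12
  have h2 := mvec_solve2_snd (avec 1) (avec 2) (Dd 1 y x0) (Dd 2 y x0) det12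
  have k1 := mvec_solve2_fst (avec 1) (avec 6) (Dd 1 y x0) (Dd 6 y x0) det16
  have k6 := mvec_solve2_snd (avec 1) (avec 6) (Dd 1 y x0) (Dd 6 y x0) det16
  cases b
  · -- down triangle
    fin_cases i
    · simp only [Famat, aFam, xT, triGrad]; norm_num
      rw [show x0 + ((0:ℤ),(0:ℤ)) = x0 from by simp [Prod.ext_iff]]; exact k1
    · simp only [Famat, aFam, xT, triGrad]; norm_num
      rw [av2_eq', mvec_sub, k1, k6]
      simp only [Dd, ed1, ed2, ed6]
      rw [show x0 + ((1:ℤ),(-1:ℤ)) + ((0:ℤ),(1:ℤ)) = x0 + (1,0) from by simp [Prod.ext_iff]]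
      abel
    · simp only [Famat, aFam, xT, triGrad]; norm_num
      rw [av3_eq', mvec_neg, k6]
      simp only [Dd, ed3, ed6]
      rw [show x0 + ((1:ℤ),(-1:ℤ)) + ((-1:ℤ),(1:ℤ)) = x0 from by simp [Prod.ext_iff]]
      abel
    · simp only [Famat, aFam, xT, triGrad]; norm_num
      rw [av4_eq, mvec_neg, k1]
      simp only [Dd, ed1, ed4]
      rw [show x0 + ((1:ℤ),(0:ℤ)) + ((-1:ℤ),(0:ℤ)) = x0 from by simp [Prod.ext_iff]]
      abel
    · simp only [Famat, aFam, xT, triGrad]; norm_num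
      rw [av5_eq', mvec_sub, k6, k1]
      simp only [Dd, ed1, ed5, ed6]
      rw [show x0 + ((1:ℤ),(0:ℤ)) + ((0:ℤ),(-1:ℤ)) = x0 + (1,-1) from by simp [Prod.ext_iff]]
      abel
    · simp only [Famat, aFam, xT, triGrad]; norm_num
      rw [show x0 + ((0:ℤ),(0:ℤ)) = x0 from by simp [Prod.ext_iff]]; exact k6
  · -- up triangle
    fin_cases i
    · simp only [Famat, aFam, xT, triGrad]; norm_num
      rw [show x0 + ((0:ℤ),(0:ℤ)) = x0 from by simp [Prod.ext_iff]]; exact h1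
    · simp only [Famat, aFam, xT, triGrad]; norm_num
      rw [show x0 + ((0:ℤ),(0:ℤ)) = x0 from by simp [Prod.ext_iff]]; exact h2
    · simp only [Famat, aFam, xT, triGrad]; norm_num
      rw [av3_eq, mvec_sub, h2, h1]
      simp only [Dd, ed1, ed2, ed3]
      rw [show x0 + ((1:ℤ),(0:ℤ)) + ((-1:ℤ),(1:ℤ)) = x0 + (0,1) from by simp [Prod.ext_iff]]
      abel
    · simp only [Famat, aFam, xT, triGrad]; norm_num
      rw [av4_eq, mvec_neg, h1]
      simp only [Dd, ed1, ed4]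
      rw [show x0 + ((1:ℤ),(0:ℤ)) + ((-1:ℤ),(0:ℤ)) = x0 from by simp [Prod.ext_iff]]
      abel
    · simp only [Famat, aFam, xT, triGrad]; norm_num
      rw [av5_eq, mvec_neg, h2]
      simp only [Dd, ed2, ed5]
      rw [show x0 + ((0:ℤ),(1:ℤ)) + ((0:ℤ),(-1:ℤ)) = x0 from by simp [Prod.ext_iff]]
      abel
    · simp only [Famat, aFam, xT, triGrad]; norm_num
      rw [av6_eq, mvec_sub, h1, h2]
      simp only [Dd, ed1, ed2, ed6]
      rw [show x0 + ((0:ℤ),(1:ℤ)) + ((1:ℤ),(-1:ℤ)) = x0 + (1,0) from by simp [Prod.ext_iff]]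
      abel

lemma xT_mem (T : Tri) (j : Fin 6) : xT T j ∈ triVerts T := by
  obtain ⟨x0, b⟩ := T
  cases b <;> fin_cases j <;> simp [xT, triVerts] <;> norm_num

lemma bdd6 (f : Fin 6 → ℝ) : BddAbove (Set.range f) := (Set.finite_range f).bddAbove

lemma step_bound (y : ℤ × ℤ → E2) (i k : Fin 6) (q : ℤ × ℤ) :
    ‖Dd ((i:ℕ) + 1) y (q + ed ((k:ℕ) + 1)) - Dd ((i:ℕ) + 1) y q‖ ≤ D2n y q := by
  have h : Dd ((i:ℕ) + 1) y (q + ed ((k:ℕ) + 1)) - Dd ((i:ℕ) + 1) y q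
      = Dd ((k:ℕ) + 1) (Dd ((i:ℕ) + 1) y) q := rfl
  rw [h, D2n]
  calc ‖Dd ((k:ℕ) + 1) (Dd ((i:ℕ) + 1) y) q‖
      ≤ ⨆ j' : Fin 6, ‖Dd ((k:ℕ) + 1) (Dd ((j':ℕ) + 1) y) q‖ :=
        le_ciSup (bdd6 (fun j' : Fin 6 => ‖Dd ((k:ℕ) + 1) (Dd ((j':ℕ) + 1) y) q‖)) i
    _ ≤ ⨆ i' : Fin 6, ⨆ j' : Fin 6, ‖Dd ((i':ℕ) + 1) (Dd ((j':ℕ) + 1) y) q‖ :=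
        le_ciSup (bdd6 (fun i' : Fin 6 =>
          ⨆ j' : Fin 6, ‖Dd ((i':ℕ) + 1) (Dd ((j':ℕ) + 1) y) q‖)) k

lemma D2n_nonneg (y : ℤ × ℤ → E2) (q : ℤ × ℤ) : 0 ≤ D2n y q :=
  Real.iSup_nonneg fun _ => Real.iSup_nonneg fun _ => norm_nonneg _

lemma D2n_le_sup (y : ℤ × ℤ → E2) (T : Tri) {v : ℤ × ℤ} (hv : v ∈ triVerts T) :
    D2n y v ≤ ⨆ n ∈ triVerts T, D2n y n := by
  set f : ℤ × ℤ → ℝ := fun n => ⨆ _ : n ∈ triVerts T, D2n y n with hf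
  have hrange : ∀ n, f n ∈ insert (0:ℝ) (((triVerts T).image (D2n y) : Finset ℝ) : Set ℝ) := by
    intro n
    by_cases h : n ∈ triVerts T
    · right
      simp only [Finset.coe_image, Set.mem_image, Finset.mem_coe]
      exact ⟨n, h, by simp [hf, ciSup_pos h]⟩
    · left
      have : IsEmpty (n ∈ triVerts T) := by simpa using h
      exact Real.iSup_of_isEmpty _
  have hb : BddAbove (Set.range f) := by
    apply Set.Finite.bddAbove
    apply Set.Finite.subset (Set.Finite.insert 0 (((triVerts T).image (D2n y)).finite_toSet))
    rintro r ⟨n, rfl⟩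
    exact hrange n
  have hfv : f v = D2n y v := ciSup_pos hv
  rw [← hfv]
  exact le_ciSup hb v

lemma sup_D2n_nonneg (y : ℤ × ℤ → E2) (T : Tri) : 0 ≤ ⨆ n ∈ triVerts T, D2n y n := by
  refine le_trans (D2n_nonneg y T.1) (D2n_le_sup y T ?_)
  obtain ⟨x0, b⟩ := T
  cases b <;> simp [triVerts]

lemma diff_le_sup (y : ℤ × ℤ → E2) (T : Tri) (i k : Fin 6) {q : ℤ × ℤ}
    (hq : q ∈ triVerts T) :
    ‖Dd ((i:ℕ)+1) y (q + ed ((k:ℕ)+1)) - Dd ((i:ℕ)+1) y q‖ ≤ ⨆ n ∈ triVerts T, D2n y n :=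
  le_trans (step_bound y i k q) (D2n_le_sup y T hq)

lemma diff_le_sup' (y : ℤ × ℤ → E2) (T : Tri) (i k : Fin 6) {p : ℤ × ℤ}
    (hp : p ∈ triVerts T) :
    ‖Dd ((i:ℕ)+1) y p - Dd ((i:ℕ)+1) y (p + ed ((k:ℕ)+1))‖ ≤ ⨆ n ∈ triVerts T, D2n y n := by
  rw [norm_sub_rev]; exact diff_le_sup y T i k hp

lemma xT_up_cases (x0 : ℤ × ℤ) (j : Fin 6) :
    xT (x0, true) j = x0 ∨ xT (x0, true) j = x0 + ((1:ℤ),(0:ℤ)) ∨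
      xT (x0, true) j = x0 + ((0:ℤ),(1:ℤ)) := by
  fin_cases j <;> simp [xT]

lemma xT_down_cases (x0 : ℤ × ℤ) (j : Fin 6) :
    xT (x0, false) j = x0 ∨ xT (x0, false) j = x0 + ((1:ℤ),(0:ℤ)) ∨
      xT (x0, false) j = x0 + ((1:ℤ),(-1:ℤ)) := by
  fin_cases j <;> simp [xT]

lemma gdiff_bound (y : ℤ × ℤ → E2) (T : Tri) (i j : Fin 6) :
    ‖Dfam y (xT T j) i - Famat (triGrad y T) i‖ ≤ ⨆ n ∈ triVerts T, D2n y n := by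
  have hD : Dfam y (xT T j) i = Dd ((i:ℕ)+1) y (xT T j) := rfl
  rw [hD, famat_eq]
  obtain ⟨x0, b⟩ := T
  cases b
  case false =>
    have hv1 : x0 ∈ triVerts (x0, false) := by simp [triVerts]
    have hv2 : x0 + ((1:ℤ),(0:ℤ)) ∈ triVerts (x0, false) := by simp [triVerts]
    have hv3 : x0 + ((1:ℤ),(-1:ℤ)) ∈ triVerts (x0, false) := by simp [triVerts]
    rcases xT_down_cases x0 j with hj|hj|hj <;> rcases xT_down_cases x0 i with hi|hi|hi <;>
        rw [hj, hi]
    · rw [sub_self, norm_zero]; exact sup_D2n_nonneg y _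
    · have h := diff_le_sup' y (x0, false) i (0:Fin 6) hv1
      norm_num [ed1] at h; exact h
    · have h := diff_le_sup' y (x0, false) i (5:Fin 6) hv1
      norm_num [ed6] at h; exact h
    · have h := diff_le_sup y (x0, false) i (0:Fin 6) hv1
      norm_num [ed1] at h; exact h
    · rw [sub_self, norm_zero]; exact sup_D2n_nonneg y _
    · have h := diff_le_sup y (x0, false) i (1:Fin 6) hv3
      norm_num [ed2] at h
      rw [show x0 + ((1:ℤ),(-1:ℤ)) + ((0:ℤ),(1:ℤ)) = x0 + ((1:ℤ),(0:ℤ)) from by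
        simp [Prod.ext_iff]] at h
      exact h
    · have h := diff_le_sup y (x0, false) i (5:Fin 6) hv1
      norm_num [ed6] at h; exact h
    · have h := diff_le_sup' y (x0, false) i (1:Fin 6) hv3
      norm_num [ed2] at h
      rw [show x0 + ((1:ℤ),(-1:ℤ)) + ((0:ℤ),(1:ℤ)) = x0 + ((1:ℤ),(0:ℤ)) from by
        simp [Prod.ext_iff]] at h
      exact h
    · rw [sub_self, norm_zero]; exact sup_D2n_nonneg y _
  case true =>
    have hv1 : x0 ∈ triVerts (x0, true) := by simp [triVerts]
    have hv2 : x0 + ((1:ℤ),(0:ℤ)) ∈ triVerts (x0, true) := by simp [triVerts]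
    have hv3 : x0 + ((0:ℤ),(1:ℤ)) ∈ triVerts (x0, true) := by simp [triVerts]
    rcases xT_up_cases x0 j with hj|hj|hj <;> rcases xT_up_cases x0 i with hi|hi|hi <;>
        rw [hj, hi]
    · rw [sub_self, norm_zero]; exact sup_D2n_nonneg y _
    · have h := diff_le_sup' y (x0, true) i (0:Fin 6) hv1
      norm_num [ed1] at h; exact h
    · have h := diff_le_sup' y (x0, true) i (1:Fin 6) hv1
      norm_num [ed2] at h; exact h
    · have h := diff_le_sup y (x0, true) i (0:Fin 6) hv1
      norm_num [ed1] at h; exact h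
    · rw [sub_self, norm_zero]; exact sup_D2n_nonneg y _
    · have h := diff_le_sup' y (x0, true) i (2:Fin 6) hv2
      norm_num [ed3] at h
      rw [show x0 + ((1:ℤ),(0:ℤ)) + ((-1:ℤ),(1:ℤ)) = x0 + ((0:ℤ),(1:ℤ)) from by
        simp [Prod.ext_iff]] at h
      exact h
    · have h := diff_le_sup y (x0, true) i (1:Fin 6) hv1
      norm_num [ed2] at h; exact h
    · have h := diff_le_sup y (x0, true) i (2:Fin 6) hv2
      norm_num [ed3] at h
      rw [show x0 + ((1:ℤ),(0:ℤ)) + ((-1:ℤ),(1:ℤ)) = x0 + ((0:ℤ),(1:ℤ)) from by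
        simp [Prod.ext_iff]] at h
      exact h
    · rw [sub_self, norm_zero]; exact sup_D2n_nonneg y _

-- Calculus lemmas
lemma hasDerivAt_line {f : (Fin 6 → E2) → ℝ} (hf : Differentiable ℝ f)
    (g u : Fin 6 → E2) (t0 : ℝ) :
    HasDerivAt (fun t : ℝ => f (g + t • u)) (fderiv ℝ f (g + t0 • u) u) t0 := by
  have hline : HasDerivAt (fun t : ℝ => g + t • u) u t0 := by
    simpa using ((hasDerivAt_id t0).smul_const u).const_add g
  have := (hf (g + t0 • u)).hasFDerivAt.comp_hasDerivAt_of_eq t0 hline rfl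
  exact this

lemma pd_apply {V : (Fin 6 → E2) → ℝ} (hV3 : ContDiff ℝ 3 V) (j : Fin 6)
    (g : Fin 6 → E2) (k : Fin 2) : pd V j g k = fderiv ℝ V g (unitv j k) := by
  have h := hasDerivAt_line (hV3.differentiable (by norm_num)) g (unitv j k) 0
  simp only [zero_smul, add_zero] at h
  exact h.deriv

lemma pd_funext {V : (Fin 6 → E2) → ℝ} (hV3 : ContDiff ℝ 3 V) (j : Fin 6) (l : Fin 2) :
    (fun g' => pd V j g' l) = fun g' => fderiv ℝ V g' (unitv j l) :=
  funext fun g' => pd_apply hV3 j g' l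

lemma Phi_contDiff {V : (Fin 6 → E2) → ℝ} (hV3 : ContDiff ℝ 3 V) (j : Fin 6) (l : Fin 2) :
    ContDiff ℝ 2 (fun g' => fderiv ℝ V g' (unitv j l)) := by
  exact (hV3.fderiv_right (by norm_num)).clm_apply contDiff_const

lemma pd2_apply {V : (Fin 6 → E2) → ℝ} (hV3 : ContDiff ℝ 3 V) (i j : Fin 6)
    (g : Fin 6 → E2) (k l : Fin 2) :
    pd2 V i j g k l = fderiv ℝ (fun g' => fderiv ℝ V g' (unitv j l)) g (unitv i k) := by
  have hdiff : Differentiable ℝ (fun g' => fderiv ℝ V g' (unitv j l)) :=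
    (Phi_contDiff hV3 j l).differentiable (by norm_num)
  have h := hasDerivAt_line hdiff g (unitv i k) 0
  simp only [zero_smul, add_zero] at h
  have hcong : (fun t : ℝ => pd V j (g + t • unitv i k) l)
      = fun t : ℝ => fderiv ℝ V (g + t • unitv i k) (unitv j l) :=
    funext fun t => pd_apply hV3 j _ l
  rw [pd2, hcong]
  exact h.deriv

lemma e2_sum_apply {ι : Type*} (s : Finset ι) (f : ι → E2) (r : Fin 2) :
    (∑ i ∈ s, f i) r = ∑ i ∈ s, f i r := by
  classical
  induction s using Finset.induction_on with
  | empty => simp [e2_zero_apply]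
  | @insert a s ha ih => rw [Finset.sum_insert ha, Finset.sum_insert ha, e2_add_apply, ih]

lemma decomp_sum (h : Fin 6 → E2) : ∑ i : Fin 6, ∑ k : Fin 2, h i k • unitv i k = h := by
  funext m
  refine e2_ext fun r => ?_
  rw [Finset.sum_apply, e2_sum_apply]
  have key : ∀ i : Fin 6, ((∑ k : Fin 2, h i k • unitv i k) m) r
      = if m = i then h m r else 0 := by
    intro i
    rw [Finset.sum_apply, e2_sum_apply]
    by_cases hmi : m = i
    · subst hmi
      have hterm : ∀ k, ((h m k • unitv m k) m) r = h m k * toE2 (Pi.single k (1:ℝ)) r := by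
        intro k
        simp [unitv, Pi.smul_apply, e2_smul_apply, toE2_apply]
      rw [Fin.sum_univ_two, hterm, hterm, if_pos rfl]
      fin_cases r <;> simp [toE2_apply, Pi.single_apply]
    · have hterm : ∀ k, ((h i k • unitv i k) m) r = 0 := by
        intro k
        simp [unitv, hmi, Pi.smul_apply, e2_zero_apply]
      simp [hterm, hmi, unitv]
  rw [Finset.sum_congr rfl fun i _ => key i, Finset.sum_ite_eq]
  simp

lemma fderiv_decomp (f : (Fin 6 → E2) → ℝ) (q h : Fin 6 → E2) :
    fderiv ℝ f q h = ∑ i : Fin 6, ∑ k : Fin 2, h i k * fderiv ℝ f q (unitv i k) := by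
  conv_lhs => rw [← decomp_sum h]
  rw [map_sum]
  refine Finset.sum_congr rfl fun i _ => ?_
  rw [map_sum]
  refine Finset.sum_congr rfl fun k _ => ?_
  rw [map_smul, smul_eq_mul]

lemma matOpNorm_bdd (A : Mat2) : BddAbove {r : ℝ | ∃ h1 h2 : E2, ‖h1‖ = 1 ∧ ‖h2‖ = 1 ∧
    r = ∑ k, ∑ l, A k l * h1 k * h2 l} := by
  refine ⟨∑ k, ∑ l, |A k l|, ?_⟩
  rintro r ⟨h1, h2, n1, n2, rfl⟩
  refine le_trans (le_abs_self _) ?_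
  refine le_trans (Finset.abs_sum_le_sum_abs _ _) ?_
  refine Finset.sum_le_sum fun k _ => ?_
  refine le_trans (Finset.abs_sum_le_sum_abs _ _) ?_
  refine Finset.sum_le_sum fun l _ => ?_
  rw [abs_mul, abs_mul]
  have e1 : |h1 k| ≤ 1 := by rw [← n1]; exact e2_abs_le h1 k
  have e2 : |h2 l| ≤ 1 := by rw [← n2]; exact e2_abs_le h2 l
  have t1 : |A k l| * |h1 k| ≤ |A k l| := mul_le_of_le_one_right (abs_nonneg _) e1
  have t2 : |A k l| * |h1 k| * |h2 l| ≤ |A k l| * |h1 k| :=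
    mul_le_of_le_one_right (by positivity) e2
  exact t2.trans t1

lemma exists_unit : ∃ w : E2, ‖w‖ = 1 := by
  refine ⟨toE2 ![1, 0], ?_⟩
  rw [e2_norm_eq]
  norm_num [toE2_apply]

lemma neg_sum_eq (A : Mat2) (u w : E2) :
    ∑ k, ∑ l, A k l * (-u) k * w l = -∑ k, ∑ l, A k l * u k * w l := by
  rw [← Finset.sum_neg_distrib]
  refine Finset.sum_congr rfl fun k _ => ?_
  rw [← Finset.sum_neg_distrib]
  refine Finset.sum_congr rfl fun l _ => ?_
  rw [e2_neg_apply]; ring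

lemma mem_matOpNorm_le (A : Mat2) (u w : E2) (hu : ‖u‖ = 1) (hw : ‖w‖ = 1) :
    |∑ k, ∑ l, A k l * u k * w l| ≤ matOpNorm A := by
  rw [abs_le]
  constructor
  · rw [neg_le]
    rw [← neg_sum_eq A u w]
    exact le_csSup (matOpNorm_bdd A) ⟨-u, w, by rw [norm_neg, hu], hw, rfl⟩
  · exact le_csSup (matOpNorm_bdd A) ⟨u, w, hu, hw, rfl⟩

lemma matOpNorm_nonneg (A : Mat2) : 0 ≤ matOpNorm A := by
  obtain ⟨w, hw⟩ := exists_unit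
  exact le_trans (abs_nonneg _) (mem_matOpNorm_le A w w hw hw)

lemma matOpNorm_bound (A : Mat2) (v w : E2) (hw : ‖w‖ = 1) :
    |∑ k, ∑ l, A k l * v k * w l| ≤ matOpNorm A * ‖v‖ := by
  by_cases hv : v = 0
  · subst hv
    have hz : ∀ k l, A k l * (0:E2) k * w l = 0 := by
      intro k l; rw [e2_zero_apply]; ring
    simp only [hz, Finset.sum_const_zero, abs_zero, norm_zero, mul_zero, le_refl]
  · set u : E2 := ‖v‖⁻¹ • v with hu_def
    have hvn : ‖v‖ ≠ 0 := norm_ne_zero_iff.mpr hv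
    have hu : ‖u‖ = 1 := by
      rw [hu_def, norm_smul, norm_inv, norm_norm]
      field_simp
    have key : ∑ k, ∑ l, A k l * v k * w l = ‖v‖ * ∑ k, ∑ l, A k l * u k * w l := by
      rw [Finset.mul_sum]
      refine Finset.sum_congr rfl fun k _ => ?_
      rw [Finset.mul_sum]
      refine Finset.sum_congr rfl fun l _ => ?_
      rw [hu_def, e2_smul_apply]
      field_simp
    rw [key, abs_mul, abs_of_nonneg (norm_nonneg v), mul_comm (matOpNorm A) (‖v‖)]
    exact mul_le_mul_of_nonneg_left (mem_matOpNorm_le A u w hu hw) (norm_nonneg v)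

lemma pd_lip (V : (Fin 6 → E2) → ℝ) (hV3 : ContDiff ℝ 3 V) (hM2 : M2fin V)
    (j : Fin 6) (g1 g0 : Fin 6 → E2) :
    ‖pd V j g1 - pd V j g0‖ ≤
      ∑ i : Fin 6, (⨆ g : Fin 6 → E2, matOpNorm (pd2 V i j g)) * ‖g1 i - g0 i‖ := by
  have Snn : ∀ i : Fin 6, 0 ≤ ⨆ g : Fin 6 → E2, matOpNorm (pd2 V i j g) := fun i =>
    le_trans (matOpNorm_nonneg (pd2 V i j g0)) (le_ciSup (hM2 i j) g0)
  by_cases hδ0 : pd V j g1 - pd V j g0 = 0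
  · rw [hδ0, norm_zero]
    exact Finset.sum_nonneg fun i _ => mul_nonneg (Snn i) (norm_nonneg _)
  set δ : E2 := pd V j g1 - pd V j g0 with hδdef
  set w : E2 := ‖δ‖⁻¹ • δ with hwdef
  have hδn : ‖δ‖ ≠ 0 := norm_ne_zero_iff.mpr hδ0
  have hw : ‖w‖ = 1 := by rw [hwdef, norm_smul, norm_inv, norm_norm]; field_simp
  set h : Fin 6 → E2 := g1 - g0 with hhdef
  set C : ℝ := ∑ i : Fin 6, (⨆ g : Fin 6 → E2, matOpNorm (pd2 V i j g)) * ‖h i‖ with hCdef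
  set φ : ℝ → ℝ := fun t => ∑ l : Fin 2, w l * fderiv ℝ V (g0 + t • h) (unitv j l) with hφdef
  set φ' : ℝ → ℝ := fun t => ∑ i : Fin 6, ∑ k : Fin 2, ∑ l : Fin 2,
      pd2 V i j (g0 + t • h) k l * (h i) k * w l with hφ'def
  have hd : ∀ t : ℝ, HasDerivAt φ (φ' t) t := by
    intro t
    have hterm : ∀ l : Fin 2,
        HasDerivAt (fun s : ℝ => w l * fderiv ℝ V (g0 + s • h) (unitv j l))
          (w l * fderiv ℝ (fun g' => fderiv ℝ V g' (unitv j l)) (g0 + t • h) h) t :=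
      fun l => (hasDerivAt_line ((Phi_contDiff hV3 j l).differentiable (by norm_num))
        g0 h t).const_mul (w l)
    have hsum := HasDerivAt.sum fun l (_ : l ∈ Finset.univ) => hterm l
    convert hsum using 1
    · rfl
    · rfl
    · funext s; simp only [hφdef, Finset.sum_apply]
    have hrhs : ∀ l : Fin 2,
        w l * fderiv ℝ (fun g' => fderiv ℝ V g' (unitv j l)) (g0 + t • h) h
          = ∑ i : Fin 6, ∑ k : Fin 2, pd2 V i j (g0 + t • h) k l * (h i) k * w l := by
      intro l
      rw [fderiv_decomp, Finset.mul_sum]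
      refine Finset.sum_congr rfl fun i _ => ?_
      rw [Finset.mul_sum]
      refine Finset.sum_congr rfl fun k _ => ?_
      rw [← pd2_apply hV3 i j _ k l]
      ring
    rw [hφ'def]
    rw [Finset.sum_congr rfl fun l (_ : l ∈ Finset.univ) => hrhs l, Finset.sum_comm]
    exact Finset.sum_congr rfl fun i _ => Finset.sum_comm
  have hbd : ∀ t ∈ Set.Ico (0:ℝ) 1, ‖φ' t‖ ≤ C := by
    intro t _
    rw [Real.norm_eq_abs, hφ'def, hCdef]
    refine le_trans (Finset.abs_sum_le_sum_abs _ _) ?_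
    refine Finset.sum_le_sum fun i _ => ?_
    refine le_trans (matOpNorm_bound (pd2 V i j (g0 + t • h)) (h i) w hw) ?_
    exact mul_le_mul_of_nonneg_right (le_ciSup (hM2 i j) (g0 + t • h)) (norm_nonneg _)
  have h01 : ‖φ 1 - φ 0‖ ≤ C :=
    norm_image_sub_le_of_norm_deriv_le_segment_01'
      (fun t _ => (hd t).hasDerivWithinAt) hbd
  have hg1 : g0 + (1:ℝ) • h = g1 := by rw [hhdef, one_smul, add_sub_cancel]
  have hg0 : g0 + (0:ℝ) • h = g0 := by rw [zero_smul, add_zero]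
  have hφ1 : φ 1 = ∑ l : Fin 2, w l * pd V j g1 l := by
    simp only [hφdef, hg1]
    exact Finset.sum_congr rfl fun l _ => by rw [pd_apply hV3 j g1 l]
  have hφ0 : φ 0 = ∑ l : Fin 2, w l * pd V j g0 l := by
    simp only [hφdef, hg0]
    exact Finset.sum_congr rfl fun l _ => by rw [pd_apply hV3 j g0 l]
  have hdiff : φ 1 - φ 0 = ‖δ‖ := by
    rw [hφ1, hφ0, ← Finset.sum_sub_distrib]
    have hterm : ∀ l : Fin 2, w l * pd V j g1 l - w l * pd V j g0 l
        = ‖δ‖⁻¹ * (δ l * δ l) := by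
      intro l
      rw [hwdef, e2_smul_apply, hδdef, e2_sub_apply]
      ring
    rw [Finset.sum_congr rfl fun l (_ : l ∈ Finset.univ) => hterm l, ← Finset.mul_sum]
    have hsq : ∑ l : Fin 2, δ l * δ l = ‖δ‖ ^ 2 := by
      rw [Fin.sum_univ_two, ← e2_sq_norm]; ring
    rw [hsq, sq]
    field_simp
  rw [hdiff, Real.norm_eq_abs, abs_of_nonneg (norm_nonneg δ)] at h01
  rw [hCdef] at h01
  refine le_trans h01 (le_of_eq (Finset.sum_congr rfl fun i _ => ?_))
  rw [hhdef]
  rfl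

section Frob
attribute [local instance] Matrix.frobeniusSeminormedAddCommGroup Matrix.frobeniusNormedSpace

lemma frobN_eq_norm (A : Mat2) : frobN A = ‖A‖ := by
  rw [frobN, Real.sqrt_eq_rpow, Matrix.frobenius_norm_def]
  simp only [Real.rpow_two, Real.norm_eq_abs, sq_abs]

lemma frobN_smul (c : ℝ) (A : Mat2) (hc : 0 ≤ c) : frobN (c • A) = c * frobN A := by
  rw [frobN_eq_norm, frobN_eq_norm, norm_smul, Real.norm_eq_abs, abs_of_nonneg hc]

lemma frobN_sum_le (B : Fin 6 → Mat2) :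
    frobN (∑ j : Fin 6, B j) ≤ ∑ j : Fin 6, frobN (B j) := by
  simp only [frobN_eq_norm]
  exact norm_sum_le _ _

end Frob

lemma frobN_outer (v w : E2) : frobN (outer v w) = ‖v‖ * ‖w‖ := by
  rw [frobN]
  have hsum : ∑ i : Fin 2, ∑ k : Fin 2, (outer v w i k) ^ 2
      = (v 0 ^ 2 + v 1 ^ 2) * (w 0 ^ 2 + w 1 ^ 2) := by
    simp only [outer, Fin.sum_univ_two]
    ring
  rw [hsum, e2_sq_norm, e2_sq_norm, Real.sqrt_mul (sq_nonneg _), Real.sqrt_sq (norm_nonneg _),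
    Real.sqrt_sq (norm_nonneg _)]

lemma sq_sqrt3 : Real.sqrt 3 ^ 2 = 3 := Real.sq_sqrt (by norm_num)

lemma norm_toE2 (a b : ℝ) : ‖toE2 ![a, b]‖ = Real.sqrt (a ^ 2 + b ^ 2) := by
  rw [e2_norm_eq]
  norm_num [toE2_apply]

lemma half_sq : (1/2:ℝ)^2 + (Real.sqrt 3 / 2)^2 = 1 := by
  rw [div_pow, div_pow, sq_sqrt3]; norm_num

lemma nv1 : ‖avec 1‖ = 1 := by rw [av1, norm_toE2]; norm_num
lemma nv2 : ‖avec 2‖ = 1 := by rw [av2, norm_toE2, half_sq, Real.sqrt_one]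
lemma nv3 : ‖avec 3‖ = 1 := by
  rw [av3, norm_toE2, neg_sq, half_sq, Real.sqrt_one]
lemma nv4 : ‖avec 4‖ = 1 := by rw [av4, norm_toE2]; norm_num
lemma nv5 : ‖avec 5‖ = 1 := by
  rw [av5, norm_toE2, neg_sq, neg_sq, half_sq, Real.sqrt_one]
lemma nv6 : ‖avec 6‖ = 1 := by
  rw [av6, norm_toE2, neg_sq, half_sq, Real.sqrt_one]

lemma norm_aFam (j : Fin 6) : ‖aFam j‖ = 1 := by
  simp only [aFam]
  fin_cases j
  · convert nv1 using 3 <;> norm_num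
  · convert nv2 using 3 <;> norm_num
  · convert nv3 using 3 <;> norm_num
  · convert nv4 using 3 <;> norm_num
  · convert nv5 using 3 <;> norm_num
  · convert nv6 using 3 <;> norm_num

lemma outer_sub (v u w : E2) : outer (v - u) w = outer v w - outer u w := by
  funext p q
  simp only [outer, e2_sub_apply, Matrix.sub_apply]
  ring

lemma Om0_nonneg : 0 ≤ Om0 := by
  rw [Om0]; positivity

end Helpers

open AC in
/-- Lipschitz estimate (5.19) for the atomistic stress. -/
theorem atomistic_stress_lipschitz
    (V : (Fin 6 → E2) → ℝ) (hV : memV V) (hM2 : M2fin V)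
    (y : ℤ × ℤ → E2) (hy : inY0 y) (T : Tri) :
    frobN (Sa V y T - Sa V (yhom (triGrad y T)) T) ≤
      Om0⁻¹ * M2 V * ⨆ n ∈ triVerts T, D2n y n := by
  have hC3 : ContDiff ℝ 3 V := hV.1
  have Snn : ∀ i j : Fin 6, 0 ≤ ⨆ g : Fin 6 → E2, matOpNorm (pd2 V i j g) := fun i j =>
    le_trans (matOpNorm_nonneg (pd2 V i j 0)) (le_ciSup (hM2 i j) 0)
  set F : Mat2 := triGrad y T with hF
  set K : ℝ := ⨆ n ∈ triVerts T, D2n y n with hKdef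
  have hS2 : Sa V (yhom F) T = Om0⁻¹ • ∑ j : Fin 6, outer (pd V j (Famat F)) (aFam j) := by
    rw [Sa]
    congr 1
    exact Finset.sum_congr rfl fun j _ => by rw [dfam_yhom]
  have hdiffM : Sa V y T - Sa V (yhom F) T
      = Om0⁻¹ • ∑ j : Fin 6,
          outer (pd V j (Dfam y (xT T j)) - pd V j (Famat F)) (aFam j) := by
    rw [hS2, Sa, ← smul_sub, ← Finset.sum_sub_distrib]
    congr 1
    exact Finset.sum_congr rfl fun j _ => (outer_sub _ _ _).symm
  rw [hdiffM, frobN_smul _ _ (inv_nonneg.mpr Om0_nonneg)]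
  have hmain : frobN (∑ j : Fin 6,
        outer (pd V j (Dfam y (xT T j)) - pd V j (Famat F)) (aFam j))
      ≤ M2 V * K := by
    calc frobN (∑ j : Fin 6,
          outer (pd V j (Dfam y (xT T j)) - pd V j (Famat F)) (aFam j))
        ≤ ∑ j : Fin 6,
            frobN (outer (pd V j (Dfam y (xT T j)) - pd V j (Famat F)) (aFam j)) :=
          frobN_sum_le _
      _ = ∑ j : Fin 6, ‖pd V j (Dfam y (xT T j)) - pd V j (Famat F)‖ := by
          refine Finset.sum_congr rfl fun j _ => ?_
          rw [frobN_outer, norm_aFam, mul_one]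
      _ ≤ ∑ j : Fin 6, ∑ i : Fin 6, (⨆ g : Fin 6 → E2, matOpNorm (pd2 V i j g)) *
            ‖Dfam y (xT T j) i - Famat F i‖ :=
          Finset.sum_le_sum fun j _ => pd_lip V hC3 hM2 j _ _
      _ ≤ ∑ j : Fin 6, ∑ i : Fin 6, (⨆ g : Fin 6 → E2, matOpNorm (pd2 V i j g)) * K := by
          refine Finset.sum_le_sum fun j _ => Finset.sum_le_sum fun i _ => ?_
          exact mul_le_mul_of_nonneg_left (gdiff_bound y T i j) (Snn i j)
      _ = (∑ j : Fin 6, ∑ i : Fin 6, ⨆ g : Fin 6 → E2, matOpNorm (pd2 V i j g)) * K := by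
          rw [Finset.sum_mul]
          exact Finset.sum_congr rfl fun j _ => (Finset.sum_mul _ _ _).symm
      _ = M2 V * K := by rw [M2, Finset.sum_comm]
  calc Om0⁻¹ * frobN (∑ j : Fin 6,
        outer (pd V j (Dfam y (xT T j)) - pd V j (Famat F)) (aFam j))
      ≤ Om0⁻¹ * (M2 V * K) :=
        mul_le_mul_of_nonneg_left hmain (inv_nonneg.mpr Om0_nonneg)
    _ = Om0⁻¹ * M2 V * K := by ring
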